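/- For any density f on [0,T] satisfying ∫₀^T f = 1 and ∫₀^T r² f(r) dr ≤ P, and the truncated Rayleigh-type density f*(r) = a r e^{−b r²/2} on [0,T] with b > 0, same normalization, and second moment exactly P, we have −∫₀^T f log(f/r) dr ≤ −∫₀^T f* log(f*/r) dr = −log a + bP/2 (Gibbs' inequality / maximum entropy under moment constraints). -/

import Mathlib

open Real MeasureTheory

/-- Antiderivative computation for the Rayleigh-type density. -/
lemma rayleigh_integral (a b T : ℝ) (hb : 0 < b) :
    ∫ r in (0:ℝ)..T, a * r * Real.exp (-b * r ^ 2 / 2)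
      = a / b * (1 - Real.exp (-b * T ^ 2 / 2)) := by
  have hderiv : ∀ r ∈ Set.uIcc (0:ℝ) T,
      HasDerivAt (fun r => -(a / b) * Real.exp (-b * r ^ 2 / 2))
        (a * r * Real.exp (-b * r ^ 2 / 2)) r := by
    intro r _
    have h1 : HasDerivAt (fun r : ℝ => -b * r ^ 2 / 2) (-b * r) r := by
      have := ((hasDerivAt_pow 2 r).const_mul (-b)).div_const 2
      simpa using this.congr_deriv (by ring)
    have h2 := (h1.exp).const_mul (-(a / b))
    refine h2.congr_deriv ?_
    field_simp
  have hcont : IntervalIntegrable (fun r => a * r * Real.exp (-b * r ^ 2 / 2))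
      volume 0 T := (by continuity : Continuous fun r : ℝ =>
        a * r * Real.exp (-b * r ^ 2 / 2)).intervalIntegrable 0 T
  rw [intervalIntegral.integral_eq_sub_of_hasDerivAt hderiv hcont]
  simp [Real.exp_zero]
  ring

theorem truncated_rayleigh_max_entropy (a b T P : ℝ)
    (ha : 0 < a) (hb : 0 < b) (hT : 0 < T) (hP : 0 < P)
    (hnorm : a / b * (1 - Real.exp (-b * T ^ 2 / 2)) = 1)
    (hmom : ∫ r in (0:ℝ)..T, r ^ 2 * (a * r * Real.exp (-b * r ^ 2 / 2)) = P) :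
    let fstar : ℝ → ℝ := fun r => a * r * Real.exp (-b * r ^ 2 / 2)
    (∀ f : ℝ → ℝ,
        (∀ r ∈ Set.Icc (0:ℝ) T, 0 ≤ f r) →
        IntervalIntegrable f volume 0 T →
        IntervalIntegrable (fun r => f r * Real.log (f r / r)) volume 0 T →
        (∫ r in (0:ℝ)..T, f r) = 1 →
        (∫ r in (0:ℝ)..T, r ^ 2 * f r) ≤ P →
        -∫ r in (0:ℝ)..T, f r * Real.log (f r / r) ≤
          -∫ r in (0:ℝ)..T, fstar r * Real.log (fstar r / r)) ∧
    -∫ r in (0:ℝ)..T, fstar r * Real.log (fstar r / r) = -Real.log a + b * P / 2 := by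
  intro fstar
  have hfstar_cont : Continuous fstar := by
    unfold fstar; continuity
  have hI1 : (∫ r in (0:ℝ)..T, fstar r) = 1 := by
    unfold fstar
    rw [rayleigh_integral a b T hb]; exact hnorm
  have hfstar_int : IntervalIntegrable fstar volume 0 T :=
    hfstar_cont.intervalIntegrable 0 T
  have hr2fstar_int : IntervalIntegrable (fun r => r ^ 2 * fstar r) volume 0 T :=
    (by continuity : Continuous fun r : ℝ => r ^ 2 * fstar r).intervalIntegrable 0 T
  -- pointwise value of log (fstar r / r) for r > 0
  have hlog : ∀ r : ℝ, 0 < r →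
      Real.log (fstar r / r) = Real.log a - b * r ^ 2 / 2 := by
    intro r hr
    have hfs : fstar r / r = a * Real.exp (-b * r ^ 2 / 2) := by
      unfold fstar
      field_simp
    rw [hfs, Real.log_mul (ne_of_gt ha) (Real.exp_ne_zero _), Real.log_exp]
    ring
  -- rewrite of the fstar-entropy integrand
  have heq : Set.EqOn (fun r => fstar r * Real.log (fstar r / r))
      (fun r => Real.log a * fstar r - b / 2 * (r ^ 2 * fstar r)) (Set.uIcc 0 T) := by
    intro r hr
    rcases eq_or_lt_of_le ((Set.uIcc_of_le hT.le ▸ hr).1) with h0 | h0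
    · simp only
      rw [← h0]
      simp [fstar]
    · simp only
      rw [hlog r h0]
      ring
  have hIf : (∫ r in (0:ℝ)..T, fstar r * Real.log (fstar r / r))
      = Real.log a - b / 2 * P := by
    rw [intervalIntegral.integral_congr heq,
      intervalIntegral.integral_sub (hfstar_int.const_mul _) (hr2fstar_int.const_mul _),
      intervalIntegral.integral_const_mul, intervalIntegral.integral_const_mul, hI1]
    have : (∫ r in (0:ℝ)..T, r ^ 2 * fstar r) = P := hmom
    rw [this]; ring
  constructor
  · intro f hf0 hfint hflogint hf1 hf2
    have hr2f_int : IntervalIntegrable (fun r => r ^ 2 * f r) volume 0 T :=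
      hfint.continuousOn_mul (by fun_prop)
    -- the comparison function
    set g : ℝ → ℝ := fun r =>
      Real.log a * f r - b / 2 * (r ^ 2 * f r) + (f r - fstar r) with hg_def
    have hgint : IntervalIntegrable g volume 0 T := by
      exact ((hfint.const_mul _).sub (hr2f_int.const_mul _)).add (hfint.sub hfstar_int)
    have hmono : (∫ r in (0:ℝ)..T, g r) ≤
        ∫ r in (0:ℝ)..T, f r * Real.log (f r / r) := by
      apply intervalIntegral.integral_mono_ae_restrict hT.le hgint hflogint
      have h0 : ∀ᵐ r ∂(volume.restrict (Set.Icc (0:ℝ) T)), r ≠ 0 := by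
        refine ae_restrict_of_ae ?_
        have : (volume : Measure ℝ) {(0:ℝ)} = 0 := measure_singleton 0
        exact measure_mono_null (fun x hx => by simpa using hx) this
      have hmem : ∀ᵐ r ∂(volume.restrict (Set.Icc (0:ℝ) T)), r ∈ Set.Icc (0:ℝ) T :=
        ae_restrict_mem measurableSet_Icc
      filter_upwards [h0, hmem] with r hr0 hrIcc
      have hrpos : 0 < r := lt_of_le_of_ne hrIcc.1 (Ne.symm hr0)
      have hfr : 0 ≤ f r := hf0 r hrIcc
      have hfsr : 0 < fstar r := by
        unfold fstar
        positivity
      have hglog : Real.log (fstar r / r) = Real.log a - b * r ^ 2 / 2 := hlog r hrpos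
      rcases eq_or_lt_of_le hfr with hf0' | hf0'
      · simp only [hg_def, ← hf0']
        simp
        linarith
      · -- f r > 0 : Gibbs pointwise inequality
        have hldiv : Real.log (f r / r) = Real.log (f r) - Real.log r :=
          Real.log_div (ne_of_gt hf0') (ne_of_gt hrpos)
        have hldiv2 : Real.log (fstar r / r) = Real.log (fstar r) - Real.log r :=
          Real.log_div (ne_of_gt hfsr) (ne_of_gt hrpos)
        have key : Real.log (fstar r / f r) ≤ fstar r / f r - 1 :=
          Real.log_le_sub_one_of_pos (div_pos hfsr hf0')
        have hldiv3 : Real.log (fstar r / f r) = Real.log (fstar r) - Real.log (f r) :=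
          Real.log_div (ne_of_gt hfsr) (ne_of_gt hf0')
        rw [hldiv3] at key
        have key2 : f r * (Real.log (fstar r) - Real.log (f r)) ≤ fstar r - f r := by
          have := mul_le_mul_of_nonneg_left key (le_of_lt hf0')
          calc f r * (Real.log (fstar r) - Real.log (f r))
              ≤ f r * (fstar r / f r - 1) := this
            _ = fstar r - f r := by field_simp
        simp only [hg_def]
        rw [hldiv]
        have : Real.log a - b * r ^ 2 / 2 = Real.log (fstar r) - Real.log r := by
          rw [← hglog, hldiv2]
        nlinarith [key2]
    have hIg : (∫ r in (0:ℝ)..T, g r)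
        = Real.log a - b / 2 * (∫ r in (0:ℝ)..T, r ^ 2 * f r) := by
      simp only [hg_def]
      rw [intervalIntegral.integral_add (((hfint.const_mul _).sub (hr2f_int.const_mul _)))
          (hfint.sub hfstar_int),
        intervalIntegral.integral_sub (hfint.const_mul _) (hr2f_int.const_mul _),
        intervalIntegral.integral_sub hfint hfstar_int,
        intervalIntegral.integral_const_mul, intervalIntegral.integral_const_mul,
        hf1, hI1]
      ring
    rw [hIf]
    rw [hIg] at hmono
    nlinarith [hmono, hf2]
  · rw [hIf]; ring
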